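/- arXiv:1811.05802 — 2 statements merged into one kernel-verified Lean document; each statement's English description precedes it below -/
import Mathlib

section
/- The projections P_n and O_k commute: P_n O_k = O_k P_n, for all n and k. -/
open MeasureTheory Filter Topology
open scoped InnerProductSpace

/-- The pointwise stabilizer `S(n,∞)` of the first `n` natural numbers inside the full
symmetric group of `ℕ` (all bijections of `ℕ`). -/
def stabSet (n : ℕ) : Set (Equiv.Perm ℕ) := {s | ∀ i < n, s i = i}

/-- `σ_m^n`, the product of the disjoint transpositions `(n+j, n+m+j)` for `j = 0,…,m-1`. -/
def sigmaPerm (n m : ℕ) : Equiv.Perm ℕ :=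
  ((List.range m).map fun j => Equiv.swap (n + j) (n + m + j)).prod

lemma listprod_fixed (l : List (Equiv.Perm ℕ)) (x : ℕ) (h : ∀ p ∈ l, p x = x) :
    l.prod x = x := by
  induction l with
  | nil => rfl
  | cons a t ih =>
      rw [List.prod_cons, Equiv.Perm.mul_apply, ih (fun p hp => h p (List.mem_cons_of_mem _ hp)),
        h a List.mem_cons_self]

lemma prod_range_apply (f : ℕ → Equiv.Perm ℕ) (j₀ x y : ℕ) (hfx : f j₀ x = y)
    (hother : ∀ j, j ≠ j₀ → f j x = x) (hy : ∀ j < j₀, f j y = y) :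
    ∀ m, j₀ < m → (((List.range m).map f).prod) x = y := by
  intro m
  induction m with
  | zero => omega
  | succ m ih =>
      intro hm
      rw [List.range_succ, List.map_append, List.prod_append]
      rcases Nat.lt_or_ge j₀ m with h | h
      · simp only [List.map_cons, List.map_nil, List.prod_cons, List.prod_nil, mul_one,
          Equiv.Perm.mul_apply, hother m (by omega)]
        exact ih h
      · have : j₀ = m := by omega
        subst this
        simp only [List.map_cons, List.map_nil, List.prod_cons, List.prod_nil, mul_one,
          Equiv.Perm.mul_apply, hfx]
        exact listprod_fixed _ _ (by
          intro p hp
          simp only [List.mem_map, List.mem_range] at hp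
          obtain ⟨j, hj, rfl⟩ := hp
          exact hy j hj)

lemma sigmaPerm_fixed {n m x : ℕ} (hx : x < n ∨ n + 2*m ≤ x) : sigmaPerm n m x = x := by
  apply listprod_fixed
  intro p hp
  simp only [List.mem_map, List.mem_range] at hp
  obtain ⟨j, hj, rfl⟩ := hp
  exact Equiv.swap_apply_of_ne_of_ne (by omega) (by omega)

lemma sigmaPerm_apply {n m x : ℕ} (h1 : n ≤ x) (h2 : x < n + m) : sigmaPerm n m x = x + m := by
  apply prod_range_apply _ (x - n)
  · have e1 : n + (x - n) = x := by omega
    have e2 : n + m + (x - n) = x + m := by omega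
    rw [e1, e2, Equiv.swap_apply_left]
  · intro j hj
    exact Equiv.swap_apply_of_ne_of_ne (by omega) (by omega)
  · intro j hj
    exact Equiv.swap_apply_of_ne_of_ne (by omega) (by omega)
  · omega

lemma sigmaPerm_comm {n m k N : ℕ} (hk : k < n) (hN : n + 2*m ≤ N) :
    sigmaPerm n m * Equiv.swap k N = Equiv.swap k N * sigmaPerm n m := by
  refine (Equiv.Perm.Disjoint.commute ?_).eq.symm
  intro x
  by_cases hx : x = k ∨ x = N
  · right
    rcases hx with rfl | rfl
    · exact sigmaPerm_fixed (Or.inl hk)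
    · exact sigmaPerm_fixed (Or.inr hN)
  · left
    push_neg at hx
    exact Equiv.swap_apply_of_ne_of_ne hx.1 hx.2

lemma sigmaPerm_swap {n m k N : ℕ} (hk : n ≤ k) (hN : n ≤ N) (hkm : k < n + m) (hNm : N < n + m) :
    sigmaPerm n m * Equiv.swap k N = Equiv.swap (k + m) (N + m) * sigmaPerm n m := by
  have := Equiv.swap_apply_apply (sigmaPerm n m) k N
  rw [sigmaPerm_apply hk hkm, sigmaPerm_apply hN hNm] at this
  rw [this]
  group

/-- the projections `P_n` and `O_k` commute. -/
theorem statement6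
    {H : Type*} [NormedAddCommGroup H] [InnerProductSpace ℂ H] [CompleteSpace H]
    (K : Equiv.Perm ℕ →* (H →L[ℂ] H))
    (hunit : ∀ g (η : H), ‖K g η‖ = ‖η‖)
    (hcont : ∀ (η : H) (ε : ℝ), 0 < ε → ∃ k : ℕ, ∀ s ∈ stabSet k, ‖K s η - η‖ < ε)
    (n k : ℕ) (P O : H →L[ℂ] H)
    (hP : ∀ η ζ : H, Tendsto (fun m => ⟪K (sigmaPerm n m) η, ζ⟫_ℂ) atTop (𝓝 ⟪P η, ζ⟫_ℂ))
    (hO : ∀ η ζ : H, Tendsto (fun N => ⟪K (Equiv.swap k N) η, ζ⟫_ℂ) atTop (𝓝 ⟪O η, ζ⟫_ℂ))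
    (hPsa : IsSelfAdjoint P) (hPidem : P.comp P = P)
    (hOsa : IsSelfAdjoint O) (hOidem : O.comp O = O) :
    P.comp O = O.comp P := by
  -- K preserves inner products
  have hKinner : ∀ (g : Equiv.Perm ℕ) (x y : H), ⟪K g x, K g y⟫_ℂ = ⟪x, y⟫_ℂ := by
    intro g x y
    exact LinearIsometry.inner_map_map ⟨(K g : H →ₗ[ℂ] H), hunit g⟩ x y
  have hKapp : ∀ (g h : Equiv.Perm ℕ) (x : H), K g (K h x) = K (g * h) x := by
    intro g h x
    rw [map_mul]; rfl
  have hKadj : ∀ (g : Equiv.Perm ℕ) (x y : H), ⟪K g x, y⟫_ℂ = ⟪x, K g⁻¹ y⟫_ℂ := by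
    intro g x y
    conv_lhs => rw [show y = K g (K g⁻¹ y) by
      rw [hKapp, mul_inv_cancel, map_one]; rfl]
    exact hKinner g x (K g⁻¹ y)
  have hPadj : ∀ x y : H, ⟪P x, y⟫_ℂ = ⟪x, P y⟫_ℂ := by
    intro x y
    conv_lhs => rw [← ContinuousLinearMap.isSelfAdjoint_iff'.mp hPsa]
    exact ContinuousLinearMap.adjoint_inner_left P y x
  have hOadj : ∀ x y : H, ⟪O x, y⟫_ℂ = ⟪x, O y⟫_ℂ := by
    intro x y
    conv_lhs => rw [← ContinuousLinearMap.isSelfAdjoint_iff'.mp hOsa]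
    exact ContinuousLinearMap.adjoint_inner_left O y x
  apply ContinuousLinearMap.ext
  intro η
  simp only [ContinuousLinearMap.comp_apply]
  apply ext_inner_right ℂ
  intro ζ
  rcases Nat.lt_or_ge k n with hk | hk
  · -- case k < n : O commutes with each K (sigmaPerm n m)
    have step1 : ∀ (m : ℕ) (x y : H),
        ⟪O (K (sigmaPerm n m) x), y⟫_ℂ = ⟪K (sigmaPerm n m) (O x), y⟫_ℂ := by
      intro m x y
      refine tendsto_nhds_unique (hO (K (sigmaPerm n m) x) y) ?_
      rw [hKadj (sigmaPerm n m) (O x) y]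
      refine (hO x (K (sigmaPerm n m)⁻¹ y)).congr' ?_
      filter_upwards [eventually_ge_atTop (n + 2*m)] with N hN
      rw [← hKadj (sigmaPerm n m) (K (Equiv.swap k N) x) y, hKapp, hKapp,
        sigmaPerm_comm hk hN]
    have lim1 : Tendsto (fun m => ⟪K (sigmaPerm n m) (O η), ζ⟫_ℂ) atTop
        (𝓝 ⟪P (O η), ζ⟫_ℂ) := hP (O η) ζ
    have lim2 : Tendsto (fun m => ⟪K (sigmaPerm n m) (O η), ζ⟫_ℂ) atTop
        (𝓝 ⟪O (P η), ζ⟫_ℂ) := by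
      have := (hP η (O ζ)).congr (fun m => (hOadj (K (sigmaPerm n m) η) ζ).symm)
      rw [← hOadj (P η) ζ] at this
      exact this.congr (fun m => step1 m η ζ)
    exact tendsto_nhds_unique lim1 lim2
  · -- case n ≤ k : P (O η) = O (P η) = P η
    -- Key: ⟪P (K (swap k N) x), y⟫ = ⟪P x, y⟫ for N ≥ n
    have keyP : ∀ N, n ≤ N → ∀ x y : H, ⟪P (K (Equiv.swap k N) x), y⟫_ℂ = ⟪P x, y⟫_ℂ := by
      intro N hN x y
      rcases eq_or_ne N k with rfl | hNk
      · rw [Equiv.swap_self]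
        have : K (Equiv.refl ℕ) x = x := by
          rw [show (Equiv.refl ℕ) = (1 : Equiv.Perm ℕ) from rfl, map_one]; rfl
        rw [this]
      refine tendsto_nhds_unique (hP (K (Equiv.swap k N) x) y) ?_
      have hdiff : Tendsto (fun m => ⟪K (sigmaPerm n m) (K (Equiv.swap k N) x), y⟫_ℂ
          - ⟪K (sigmaPerm n m) x, y⟫_ℂ) atTop (𝓝 0) := by
        rw [NormedAddCommGroup.tendsto_nhds_zero]
        intro ε hε
        have hδ : 0 < ε / (‖x‖ + 1) := by positivity
        obtain ⟨L, hL⟩ := hcont y (ε / (‖x‖ + 1)) hδ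
        filter_upwards [eventually_ge_atTop (max L (max k N) + 1)] with m hm
        have hkm : k < n + m := by omega
        have hNm : N < n + m := by omega
        have heq : K (sigmaPerm n m) (K (Equiv.swap k N) x)
            = K (Equiv.swap (k + m) (N + m)) (K (sigmaPerm n m) x) := by
          rw [hKapp, hKapp, sigmaPerm_swap hk hN hkm hNm]
        rw [heq, hKadj (Equiv.swap (k + m) (N + m)) (K (sigmaPerm n m) x) y,
          ← inner_sub_right]
        have hstab : ∀ i < L, Equiv.swap (k + m) (N + m) i = i := by
          intro i hi
          exact Equiv.swap_apply_of_ne_of_ne (by omega) (by omega)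
        have hLbound : ‖K (Equiv.swap (k + m) (N + m))⁻¹ y - y‖ < ε / (‖x‖ + 1) := by
          rw [Equiv.swap_inv]
          exact hL _ hstab
        calc ‖⟪K (sigmaPerm n m) x, K (Equiv.swap (k + m) (N + m))⁻¹ y - y⟫_ℂ‖
            ≤ ‖K (sigmaPerm n m) x‖ * ‖K (Equiv.swap (k + m) (N + m))⁻¹ y - y‖ :=
              norm_inner_le_norm _ _
          _ = ‖x‖ * ‖K (Equiv.swap (k + m) (N + m))⁻¹ y - y‖ := by rw [hunit]
          _ ≤ (‖x‖ + 1) * ‖K (Equiv.swap (k + m) (N + m))⁻¹ y - y‖ := by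
              apply mul_le_mul_of_nonneg_right (by linarith) (norm_nonneg _)
          _ < (‖x‖ + 1) * (ε / (‖x‖ + 1)) := by
              apply mul_lt_mul_of_pos_left hLbound (by positivity)
          _ = ε := by field_simp
      have := hdiff.add (hP x y)
      rw [zero_add] at this
      exact this.congr (fun m => by ring)
    have PK : ∀ N, n ≤ N → ∀ x : H, P (K (Equiv.swap k N) x) = P x := by
      intro N hN x
      exact ext_inner_right ℂ (fun y => keyP N hN x y)
    have KP : ∀ N, n ≤ N → ∀ x : H, K (Equiv.swap k N) (P x) = P x := by
      intro N hN x
      refine ext_inner_right ℂ (fun y => ?_)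
      rw [hKadj, Equiv.swap_inv, hPadj x (K (Equiv.swap k N) y), PK N hN y,
        ← hPadj x y]
    have RHS : ⟪O (P η), ζ⟫_ℂ = ⟪P η, ζ⟫_ℂ := by
      refine tendsto_nhds_unique (hO (P η) ζ) ?_
      refine Tendsto.congr' ?_ tendsto_const_nhds
      filter_upwards [eventually_ge_atTop n] with N hN
      rw [KP N hN η]
    have LHS : ⟪P (O η), ζ⟫_ℂ = ⟪P η, ζ⟫_ℂ := by
      rw [hPadj (O η) ζ]
      have : ⟪O η, P ζ⟫_ℂ = ⟪η, P ζ⟫_ℂ := by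
        refine tendsto_nhds_unique (hO η (P ζ)) ?_
        refine Tendsto.congr' ?_ tendsto_const_nhds
        filter_upwards [eventually_ge_atTop n] with N hN
        rw [hKadj, Equiv.swap_inv, KP N hN ζ]
      rw [this, ← hPadj η ζ]
    rw [LHS, RHS]
end

section
/- Let K be a continuous unitary representation of S̄∞ on H with depth n, and let σ_M^n = (n+1, n+M+1)···(n+M, n+2M). For M > m, σ_M^n can be written as s·σ_m^n·t with s, t ∈ S(n+m,∞); consequently ⟨(K(σ_M^n) − K(σ_m^n))η, ζ⟩ → 0 as m, M → ∞ for all η, ζ ∈ H. -/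
open MeasureTheory Filter Topology
open scoped InnerProductSpace

lemma listProd_fix {x : ℕ} : ∀ (l : List (Equiv.Perm ℕ)), (∀ g ∈ l, g x = x) → l.prod x = x := by
  intro l
  induction l with
  | nil => intro _; rfl
  | cons a l ih =>
    intro h
    rw [List.prod_cons, Equiv.Perm.mul_apply,
      ih (fun g hg => h g (List.mem_cons_of_mem a hg)), h a List.mem_cons_self]

lemma prodSwap_fix (a b m x : ℕ) (h : ∀ j < m, x ≠ a + j ∧ x ≠ b + j) :
    (((List.range m).map fun j => Equiv.swap (a + j) (b + j)).prod : Equiv.Perm ℕ) x = x := by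
  apply listProd_fix
  intro g hg
  simp only [List.mem_map, List.mem_range] at hg
  obtain ⟨j, hj, rfl⟩ := hg
  exact Equiv.swap_apply_of_ne_of_ne (h j hj).1 (h j hj).2

lemma prodSwap_left (a b : ℕ) : ∀ m, a + m ≤ b → ∀ i < m,
    (((List.range m).map fun j => Equiv.swap (a + j) (b + j)).prod : Equiv.Perm ℕ) (a + i)
      = b + i := by
  intro m
  induction m with
  | zero => intro _ i hi; omega
  | succ m ih =>
    intro hab i hi
    rw [List.range_succ, List.map_append, List.prod_append]
    simp only [List.map_cons, List.map_nil, List.prod_cons, List.prod_nil, mul_one]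
    rw [Equiv.Perm.mul_apply]
    rcases Nat.lt_succ_iff_lt_or_eq.mp hi with h | rfl
    · rw [Equiv.swap_apply_of_ne_of_ne (by omega : a + i ≠ a + m) (by omega : a + i ≠ b + m)]
      exact ih (by omega) i h
    · rw [Equiv.swap_apply_left]
      exact prodSwap_fix a b i (b + i) (fun j hj => ⟨by omega, by omega⟩)

lemma prodSwap_right (a b : ℕ) : ∀ m, a + m ≤ b → ∀ i < m,
    (((List.range m).map fun j => Equiv.swap (a + j) (b + j)).prod : Equiv.Perm ℕ) (b + i)
      = a + i := by
  intro m
  induction m with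
  | zero => intro _ i hi; omega
  | succ m ih =>
    intro hab i hi
    rw [List.range_succ, List.map_append, List.prod_append]
    simp only [List.map_cons, List.map_nil, List.prod_cons, List.prod_nil, mul_one]
    rw [Equiv.Perm.mul_apply]
    rcases Nat.lt_succ_iff_lt_or_eq.mp hi with h | rfl
    · rw [Equiv.swap_apply_of_ne_of_ne (by omega : b + i ≠ a + m) (by omega : b + i ≠ b + m)]
      exact ih (by omega) i h
    · rw [Equiv.swap_apply_right]
      exact prodSwap_fix a b i (a + i) (fun j hj => ⟨by omega, by omega⟩)

lemma sigma_fix (n m x : ℕ) (h : x < n ∨ n + 2 * m ≤ x) : sigmaPerm n m x = x :=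
  prodSwap_fix n (n + m) m x (fun j hj => ⟨by omega, by omega⟩)

lemma sigma_left (n m : ℕ) : ∀ i < m, sigmaPerm n m (n + i) = n + m + i :=
  fun i hi => prodSwap_left n (n + m) m le_rfl i hi

lemma sigma_right (n m : ℕ) : ∀ i < m, sigmaPerm n m (n + m + i) = n + i :=
  fun i hi => prodSwap_right n (n + m) m le_rfl i hi

lemma sigma_sq (n m x : ℕ) : sigmaPerm n m (sigmaPerm n m x) = x := by
  by_cases h1 : x < n ∨ n + 2 * m ≤ x
  · rw [sigma_fix n m x h1, sigma_fix n m x h1]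
  · by_cases h2 : x < n + m
    · have hx : x = n + (x - n) := by omega
      rw [hx, sigma_left n m _ (by omega), sigma_right n m _ (by omega)]
    · have hx : x = n + m + (x - (n + m)) := by omega
      rw [hx, sigma_right n m _ (by omega), sigma_left n m _ (by omega)]

lemma sigma_invol (n m : ℕ) : (sigmaPerm n m)⁻¹ = sigmaPerm n m := by
  apply inv_eq_of_mul_eq_one_left
  ext x
  simp [Equiv.Perm.mul_apply, sigma_sq]

/-- The explicit permutation `t` fixing `[0, n+m)` with `t⁻¹(n+m+j) = n+M+j`. -/
def shiftPerm (n m M : ℕ) (h : m < M) : Equiv.Perm ℕ where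
  toFun x := if x < n + m then x else if x < n + M then x + m
    else if x < n + M + m then x - (M - m) else x
  invFun y := if y < n + m then y else if y < n + 2 * m then y + (M - m)
    else if y < n + M + m then y - m else y
  left_inv x := by dsimp only; split_ifs <;> omega
  right_inv y := by dsimp only; split_ifs <;> omega

lemma shiftPerm_inv_apply (n m M : ℕ) (h : m < M) (y : ℕ) :
    ((shiftPerm n m M h)⁻¹ : Equiv.Perm ℕ) y =
      if y < n + m then y else if y < n + 2 * m then y + (M - m)
        else if y < n + M + m then y - m else y := rfl

lemma decomp (n m M : ℕ) (h : m < M) :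
    ∃ s ∈ stabSet (n + m), ∃ t ∈ stabSet (n + m), sigmaPerm n M = s * sigmaPerm n m * t := by
  refine ⟨sigmaPerm n M * (shiftPerm n m M h)⁻¹ * (sigmaPerm n m)⁻¹, ?_,
    shiftPerm n m M h, ?_, by group⟩
  · intro i hi
    simp only [Equiv.Perm.mul_apply]
    rw [sigma_invol]
    rcases lt_or_ge i n with hin | hin
    · rw [sigma_fix n m i (Or.inl hin), shiftPerm_inv_apply, if_pos (by omega),
        sigma_fix n M i (Or.inl hin)]
    · have hi' : i = n + (i - n) := by omega
      rw [hi', sigma_left n m _ (by omega), shiftPerm_inv_apply,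
        if_neg (by omega), if_pos (by omega)]
      have he : n + m + (i - n) + (M - m) = n + M + (i - n) := by omega
      rw [he]
      exact sigma_right n M _ (by omega)
  · intro i hi
    simp only [shiftPerm, Equiv.coe_fn_mk]
    rw [if_pos hi]

lemma stab_inv {k : ℕ} {s : Equiv.Perm ℕ} (hs : s ∈ stabSet k) : s⁻¹ ∈ stabSet k := by
  intro i hi
  calc s⁻¹ i = s⁻¹ (s i) := by rw [hs i hi]
    _ = i := by simp

lemma Kinner {H : Type*} [NormedAddCommGroup H] [InnerProductSpace ℂ H]
    (K : Equiv.Perm ℕ →* (H →L[ℂ] H)) (hunit : ∀ g (η : H), ‖K g η‖ = ‖η‖)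
    (g : Equiv.Perm ℕ) (x y : H) : ⟪K g x, K g y⟫_ℂ = ⟪x, y⟫_ℂ :=
  LinearIsometry.inner_map_map ⟨(K g).toLinearMap, hunit g⟩ x y

/-- for `M > m`, `σ_M^n` can be written as `s · σ_m^n · t` with
`s, t ∈ S(n+m,∞)`; consequently `⟪(K(σ_M^n) - K(σ_m^n))η, ζ⟫ → 0` as `m, M → ∞`. -/
theorem statement19
    {H : Type*} [NormedAddCommGroup H] [InnerProductSpace ℂ H] [CompleteSpace H]
    (K : Equiv.Perm ℕ →* (H →L[ℂ] H))
    (hunit : ∀ g (η : H), ‖K g η‖ = ‖η‖)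
    (hcont : ∀ (η : H) (ε : ℝ), 0 < ε → ∃ k : ℕ, ∀ s ∈ stabSet k, ‖K s η - η‖ < ε)
    (n : ℕ) :
    (∀ m M : ℕ, m < M → ∃ s ∈ stabSet (n + m), ∃ t ∈ stabSet (n + m),
        sigmaPerm n M = s * sigmaPerm n m * t) ∧
      ∀ η ζ : H,
        Tendsto (fun p : ℕ × ℕ =>
            ⟪K (sigmaPerm n p.1) η - K (sigmaPerm n p.2) η, ζ⟫_ℂ)
          atTop (𝓝 0) := by
  refine ⟨fun m M h => decomp n m M h, fun η ζ => ?_⟩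
  rw [Metric.tendsto_atTop]
  intro ε hε
  set c : ℝ := ‖η‖ + ‖ζ‖ + 1 with hcdef
  have hc : 0 < c := by positivity
  have hε' : 0 < ε / c := by positivity
  obtain ⟨k₁, hk₁⟩ := hcont η (ε / c) hε'
  obtain ⟨k₂, hk₂⟩ := hcont ζ (ε / c) hε'
  set N := max k₁ k₂ with hNdef
  have hk1N : k₁ ≤ N := le_max_left _ _
  have hk2N : k₂ ≤ N := le_max_right _ _
  have key : ∀ m M : ℕ, N ≤ m → m < M →
      ‖⟪K (sigmaPerm n M) η - K (sigmaPerm n m) η, ζ⟫_ℂ‖ < ε := by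
    intro m M hm hmM
    obtain ⟨s, hs, t, ht, hdec⟩ := decomp n m M hmM
    have hb1 : ‖K t η - η‖ < ε / c := hk₁ t (fun i hi => ht i (by omega))
    have hsinv : s⁻¹ ∈ stabSet (n + m) := stab_inv hs
    have hb2 : ‖K s⁻¹ ζ - ζ‖ < ε / c := hk₂ s⁻¹ (fun i hi => hsinv i (by omega))
    have h2 : K s (K s⁻¹ ζ) = ζ := by
      rw [← ContinuousLinearMap.mul_apply, ← map_mul, mul_inv_cancel, map_one,
        ContinuousLinearMap.one_apply]
    have e1 : ⟪K (sigmaPerm n M) η, ζ⟫_ℂ = ⟪K (sigmaPerm n m) (K t η), K s⁻¹ ζ⟫_ℂ := by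
      conv_lhs => rw [hdec, map_mul, map_mul, ContinuousLinearMap.mul_apply,
        ContinuousLinearMap.mul_apply, ← h2]
      rw [Kinner K hunit]
    have hEq : ⟪K (sigmaPerm n M) η - K (sigmaPerm n m) η, ζ⟫_ℂ
        = ⟪K (sigmaPerm n m) (K t η - η), K s⁻¹ ζ⟫_ℂ
          + ⟪K (sigmaPerm n m) η, K s⁻¹ ζ - ζ⟫_ℂ := by
      rw [map_sub, inner_sub_left, inner_sub_left, inner_sub_right, e1]
      ring
    have hfinal : (ε / c) * ‖ζ‖ + ‖η‖ * (ε / c) < ε := by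
      have h3 : ‖ζ‖ + ‖η‖ < c := by rw [hcdef]; linarith
      have h5 : (ε / c) * (‖ζ‖ + ‖η‖) < (ε / c) * c := by
        exact mul_lt_mul_of_pos_left h3 hε'
      have h6 : ε / c * c = ε := div_mul_cancel₀ ε hc.ne'
      nlinarith
    calc ‖⟪K (sigmaPerm n M) η - K (sigmaPerm n m) η, ζ⟫_ℂ‖
        = ‖⟪K (sigmaPerm n m) (K t η - η), K s⁻¹ ζ⟫_ℂ
            + ⟪K (sigmaPerm n m) η, K s⁻¹ ζ - ζ⟫_ℂ‖ := by rw [hEq]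
      _ ≤ ‖⟪K (sigmaPerm n m) (K t η - η), K s⁻¹ ζ⟫_ℂ‖
            + ‖⟪K (sigmaPerm n m) η, K s⁻¹ ζ - ζ⟫_ℂ‖ := norm_add_le _ _
      _ ≤ ‖K (sigmaPerm n m) (K t η - η)‖ * ‖K s⁻¹ ζ‖
            + ‖K (sigmaPerm n m) η‖ * ‖K s⁻¹ ζ - ζ‖ :=
          add_le_add (norm_inner_le_norm _ _) (norm_inner_le_norm _ _)
      _ = ‖K t η - η‖ * ‖ζ‖ + ‖η‖ * ‖K s⁻¹ ζ - ζ‖ := by rw [hunit, hunit, hunit]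
      _ ≤ (ε / c) * ‖ζ‖ + ‖η‖ * ‖K s⁻¹ ζ - ζ‖ :=
          add_le_add (mul_le_mul_of_nonneg_right hb1.le (norm_nonneg _)) le_rfl
      _ ≤ (ε / c) * ‖ζ‖ + ‖η‖ * (ε / c) :=
          add_le_add le_rfl (mul_le_mul_of_nonneg_left hb2.le (norm_nonneg _))
      _ < ε := hfinal
  refine ⟨(N, N), fun p hp => ?_⟩
  rw [dist_zero_right]
  rcases lt_trichotomy p.1 p.2 with hlt | heq | hgt
  · rw [show K (sigmaPerm n p.1) η - K (sigmaPerm n p.2) η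
        = -(K (sigmaPerm n p.2) η - K (sigmaPerm n p.1) η) by abel, inner_neg_left, norm_neg]
    exact key p.1 p.2 hp.1 hlt
  · rw [heq]
    simpa using hε
  · exact key p.2 p.1 hp.2 hgt
end
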